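/- For every n ≥ 1, the total relative entropy satisfies H_n ≤ ln(1/w_μ), where w_μ is the weight of the true distribution μ in the mixture ξ. -/

import Mathlib

open Finset Filter

/-- A probability distribution on finite binary strings:
nonnegative, `1` on the empty string, and additive under one-symbol extension. -/
def IsDistr (ρ : List Bool → ℝ) : Prop :=
  (∀ x, 0 ≤ ρ x) ∧ ρ [] = 1 ∧
    ∀ x, ρ x = ρ (x ++ [false]) + ρ (x ++ [true])

/-- Conditional probability `ρ(b | x) = ρ(xb)/ρ(x)` (junk `0` when `ρ x = 0`). -/
noncomputable def condP (ρ : List Bool → ℝ) (x : List Bool) (b : Bool) : ℝ :=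
  ρ (x ++ [b]) / ρ x

/-- Instantaneous relative entropy
`h_t(x) = ∑_b μ(b|x) ln (μ(b|x)/ξ(b|x))` (conventions `0·ln 0 = 0` are automatic
since `Real.log 0 = 0` and `r/0 = 0`). -/
noncomputable def instEnt (μ ξ : List Bool → ℝ) (x : List Bool) : ℝ :=
  ∑ b : Bool, condP μ x b * Real.log (condP μ x b / condP ξ x b)

/-- Total relative entropy `H_n = ∑_{t=1}^n ∑_{x_{<t}} μ(x_{<t}) h_t(x_{<t})`
(histories of length `t-1`, i.e. length `t ∈ {0,…,n-1}`). -/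
noncomputable def totalEnt (μ ξ : List Bool → ℝ) (n : ℕ) : ℝ :=
  ∑ t ∈ Finset.range n, ∑ x : Fin t → Bool,
    μ (List.ofFn x) * instEnt μ ξ (List.ofFn x)

/-- `ρ`-expected loss of predicting `y` after history `x`. -/
noncomputable def expLoss (ρ : List Bool → ℝ) (l : Bool → Bool → ℝ)
    (x : List Bool) (y : Bool) : ℝ :=
  ∑ b : Bool, condP ρ x b * l b y

/-- `Y` is a fixed choice of minimizers for the scheme `Λ_ρ`. -/
def IsPredictor (ρ : List Bool → ℝ) (l : Bool → Bool → ℝ)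
    (Y : List Bool → Bool) : Prop :=
  ∀ x y, expLoss ρ l x (Y x) ≤ expLoss ρ l x y

/-- Total `μ`-expected loss `L_{nΛ}` of the scheme with minimizers `Y`. -/
noncomputable def totalLoss (μ : List Bool → ℝ) (l : Bool → Bool → ℝ)
    (Y : List Bool → Bool) (n : ℕ) : ℝ :=
  ∑ t ∈ Finset.range n, ∑ x : Fin t → Bool,
    μ (List.ofFn x) * expLoss μ l (List.ofFn x) (Y (List.ofFn x))

private lemma sum_snoc_aux {n : ℕ} (g : (Fin (n + 1) → Bool) → ℝ) :
    ∑ x : Fin (n + 1) → Bool, g x =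
      ∑ y : Fin n → Bool, ∑ b : Bool, g (Fin.snoc y b) := by
  rw [← (Fin.snocEquiv (fun _ => Bool)).sum_comp g, Fintype.sum_prod_type,
    Finset.sum_comm]
  rfl

private lemma ofFn_snoc_aux {n : ℕ} (y : Fin n → Bool) (b : Bool) :
    List.ofFn (Fin.snoc y b : Fin (n + 1) → Bool) = List.ofFn y ++ [b] := by
  rw [List.ofFn_succ']
  simp [List.concat_eq_append]

private lemma sum_mu_aux (μ : List Bool → ℝ) (hμ : IsDistr μ) (n : ℕ) :
    ∑ x : Fin n → Bool, μ (List.ofFn x) = 1 := by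
  induction n with
  | zero => simp [hμ.2.1]
  | succ n ih =>
    rw [sum_snoc_aux]
    simp_rw [ofFn_snoc_aux]
    calc ∑ y : Fin n → Bool, ∑ b : Bool, μ (List.ofFn y ++ [b])
        = ∑ y : Fin n → Bool, μ (List.ofFn y) := by
          refine Finset.sum_congr rfl fun y _ => ?_
          rw [Fintype.sum_bool]
          linarith [hμ.2.2 (List.ofFn y)]
      _ = 1 := ih

private lemma key_aux (μ ξ : List Bool → ℝ) (hμ : IsDistr μ)
    (hpos : ∀ x, 0 < μ x → 0 < ξ x) (x : List Bool) :
    ∑ b : Bool, μ (x ++ [b]) * Real.log (μ (x ++ [b]) / ξ (x ++ [b])) =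
      μ x * Real.log (μ x / ξ x) + μ x * instEnt μ ξ x := by
  by_cases hx : μ x = 0
  · have h0 : ∀ b : Bool, μ (x ++ [b]) = 0 := by
      have hadd := hμ.2.2 x
      have h1 := hμ.1 (x ++ [false])
      have h2 := hμ.1 (x ++ [true])
      intro b; cases b <;> linarith [hx ▸ hadd]
    simp [instEnt, condP, h0, hx]
  · have hμx : 0 < μ x := lt_of_le_of_ne (hμ.1 x) (Ne.symm hx)
    have hξx : 0 < ξ x := hpos x hμx
    have hterm : ∀ b : Bool, μ (x ++ [b]) * Real.log (μ (x ++ [b]) / ξ (x ++ [b])) =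
        μ (x ++ [b]) * Real.log (μ x / ξ x) +
        μ x * (condP μ x b * Real.log (condP μ x b / condP ξ x b)) := by
      intro b
      by_cases hb : μ (x ++ [b]) = 0
      · simp [hb, condP]
      · have hμb : 0 < μ (x ++ [b]) := lt_of_le_of_ne (hμ.1 _) (Ne.symm hb)
        have hξb : 0 < ξ (x ++ [b]) := hpos _ hμb
        have hc : μ x * condP μ x b = μ (x ++ [b]) := by
          rw [condP, mul_div_assoc', mul_div_cancel_left₀ _ hμx.ne']
        have hlog : Real.log (μ (x ++ [b]) / ξ (x ++ [b])) =
            Real.log (μ x / ξ x) + Real.log (condP μ x b / condP ξ x b) := by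
          rw [condP, condP, ← Real.log_mul (by positivity) (by positivity)]
          congr 1
          field_simp
        rw [hlog, mul_add, ← hc]
        ring
    simp_rw [hterm]
    rw [Finset.sum_add_distrib, ← Finset.mul_sum, ← Finset.sum_mul]
    have hs : ∑ b : Bool, μ (x ++ [b]) = μ x := by
      rw [Fintype.sum_bool]
      linarith [hμ.2.2 x]
    rw [hs, instEnt]

private lemma chain_aux (μ ξ : List Bool → ℝ) (hμ : IsDistr μ)
    (hpos : ∀ x, 0 < μ x → 0 < ξ x) (hξe : ξ [] = 1) (n : ℕ) :
    totalEnt μ ξ n = ∑ x : Fin n → Bool,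
      μ (List.ofFn x) * Real.log (μ (List.ofFn x) / ξ (List.ofFn x)) := by
  induction n with
  | zero => simp [totalEnt, hμ.2.1, hξe]
  | succ n ih =>
    rw [totalEnt, Finset.sum_range_succ, ← totalEnt, ih, sum_snoc_aux]
    simp_rw [ofFn_snoc_aux]
    rw [← Finset.sum_add_distrib]
    refine Finset.sum_congr rfl fun y _ => ?_
    exact (key_aux μ ξ hμ hpos (List.ofFn y)).symm

/-- entropy bound, eq. (5): for every `n ≥ 1`,
`H_n ≤ ln (1/w_μ)` where `w_μ` is the weight of the true distribution `μ = μs i₀`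
in the universal mixture `ξ = ∑ i, w i • μs i`. -/
theorem entropy_bound {ι : Type*} [Countable ι]
    (μs : ι → List Bool → ℝ) (w : ι → ℝ)
    (hμs : ∀ i, IsDistr (μs i)) (hw : ∀ i, 0 < w i) (hw1 : HasSum w 1)
    (ξ : List Bool → ℝ) (hξ : ∀ x, HasSum (fun i => w i * μs i x) (ξ x))
    (i₀ : ι) (n : ℕ) (hn : 1 ≤ n) :
    totalEnt (μs i₀) ξ n ≤ Real.log (1 / w i₀) := by
  have hμ := hμs i₀
  have hlb : ∀ x, w i₀ * μs i₀ x ≤ ξ x := fun x =>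
    le_hasSum (hξ x) i₀ fun j _ => mul_nonneg (hw j).le ((hμs j).1 x)
  have hpos : ∀ x, 0 < μs i₀ x → 0 < ξ x := fun x hx =>
    lt_of_lt_of_le (mul_pos (hw i₀) hx) (hlb x)
  have hξe : ξ [] = 1 := by
    have h1 : HasSum w (ξ []) := by
      simpa [fun i => (hμs i).2.1] using hξ []
    exact h1.unique hw1
  rw [chain_aux (μs i₀) ξ hμ hpos hξe n]
  have hw01 : w i₀ ≤ 1 := le_hasSum hw1 i₀ fun j _ => (hw j).le
  calc ∑ x : Fin n → Bool,
        μs i₀ (List.ofFn x) * Real.log (μs i₀ (List.ofFn x) / ξ (List.ofFn x))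
      ≤ ∑ x : Fin n → Bool, μs i₀ (List.ofFn x) * Real.log (1 / w i₀) := by
        refine Finset.sum_le_sum fun x _ => ?_
        by_cases hx : μs i₀ (List.ofFn x) = 0
        · simp [hx]
        · have hμx : 0 < μs i₀ (List.ofFn x) := lt_of_le_of_ne (hμ.1 _) (Ne.symm hx)
          have hξx : 0 < ξ (List.ofFn x) := hpos _ hμx
          refine mul_le_mul_of_nonneg_left ?_ hμx.le
          refine Real.log_le_log (by positivity) ?_
          rw [div_le_div_iff₀ hξx (hw i₀)]
          linarith [hlb (List.ofFn x)]
    _ = Real.log (1 / w i₀) := by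
        rw [← Finset.sum_mul, sum_mu_aux (μs i₀) hμ n, one_mul]
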